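/- For the impulse dynamics solution δv = −M⁻¹Jᵀ(J M⁻¹ Jᵀ)⁻¹ J v, the post-impact kinetic energy is at most the pre-impact kinetic energy: (v+δv)ᵀ M (v+δv) ≤ vᵀ M v. -/

import Mathlib

open Matrix

theorem impulse_dynamics_energy_dissipation (n m : ℕ)
    (M : Matrix (Fin n) (Fin n) ℝ) (hM : M.PosDef)
    (J : Matrix (Fin m) (Fin n) ℝ) (hJ : J.rank = m)
    (v : Fin n → ℝ) :
    let δv := -((M⁻¹ * Jᵀ * (J * M⁻¹ * Jᵀ)⁻¹ * J) *ᵥ v)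
    (v + δv) ⬝ᵥ (M *ᵥ (v + δv)) ≤ v ⬝ᵥ (M *ᵥ v) := by
  intro δv
  set S : Matrix (Fin m) (Fin m) ℝ := J * M⁻¹ * Jᵀ with hSdef
  have hMinv : (M⁻¹).PosDef := hM.inv
  -- J has linearly independent rows
  have hrows : LinearIndependent ℝ (fun i ↦ J i) := by
    rw [linearIndependent_iff_card_eq_finrank_span]
    unfold Set.finrank
    change Fintype.card (Fin m) = Module.finrank ℝ (Submodule.span ℝ (Set.range J.row))
    rw [← J.rank_eq_finrank_span_row, hJ, Fintype.card_fin]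
  have hJinj : Function.Injective J.vecMul := Matrix.vecMul_injective_iff.mpr hrows
  have hMinvSym : (M⁻¹)ᵀ = M⁻¹ := by
    have := hMinv.isHermitian.eq
    rwa [conjTranspose_eq_transpose_of_trivial] at this
  -- S is positive definite
  have hS : S.PosDef := by
    refine Matrix.PosDef.of_dotProduct_mulVec_pos ?_ (fun x hx => ?_)
    · show Sᴴ = S
      rw [conjTranspose_eq_transpose_of_trivial, hSdef, transpose_mul, transpose_mul,
        transpose_transpose, hMinvSym, Matrix.mul_assoc]
    · have hw : Jᵀ *ᵥ x ≠ 0 := by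
        rw [mulVec_transpose]
        intro h
        exact hx (hJinj (by simpa using h))
      have := (posDef_iff_dotProduct_mulVec.mp hMinv).2 hw
      simpa [hSdef, star_trivial, Matrix.mul_assoc, ← mulVec_mulVec,
        dotProduct_mulVec, mulVec_transpose, vecMul_vecMul] using this
  have hSinv : (S⁻¹).PosDef := hS.inv
  have hSym : Sᵀ = S := by
    have := hS.isHermitian.eq
    rwa [conjTranspose_eq_transpose_of_trivial] at this
  have hSinvSym : (S⁻¹)ᵀ = S⁻¹ := by rw [transpose_nonsing_inv, hSym]
  have hMSym : Mᵀ = M := by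
    have := hM.isHermitian.eq
    rwa [conjTranspose_eq_transpose_of_trivial] at this
  set A : Matrix (Fin n) (Fin n) ℝ := M⁻¹ * Jᵀ * S⁻¹ * J with hAdef
  set B : Matrix (Fin n) (Fin n) ℝ := Jᵀ * S⁻¹ * J with hBdef
  have hB : B.PosSemidef := by
    have := hSinv.posSemidef.mul_mul_conjTranspose_same Jᵀ
    simpa [hBdef, conjTranspose_eq_transpose_of_trivial] using this
  have hMA : M * A = B := by
    rw [hAdef, hBdef]
    simp only [← Matrix.mul_assoc]
    rw [Matrix.mul_nonsing_inv M hM.det_pos.ne'.isUnit, Matrix.one_mul]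
  have hBsym : Bᵀ = B := by
    simp [hBdef, transpose_mul, hSinvSym, Matrix.mul_assoc]
  have hcollapse : ∀ (Y : Matrix (Fin m) (Fin n) ℝ), J * (M⁻¹ * (Jᵀ * Y)) = S * Y := by
    intro Y
    rw [hSdef]
    simp [Matrix.mul_assoc]
  have hAtB : Aᵀ * B = B := by
    have hAt : Aᵀ = Jᵀ * (S⁻¹ * (J * M⁻¹)) := by
      simp [hAdef, transpose_mul, hSinvSym, hMinvSym, Matrix.mul_assoc]
    rw [hAt, hBdef]
    simp only [Matrix.mul_assoc]
    rw [hcollapse (S⁻¹ * J), ← Matrix.mul_assoc S⁻¹ S,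
      Matrix.nonsing_inv_mul S hS.det_pos.ne'.isUnit, Matrix.one_mul]
  have hAtM : Aᵀ * M = B := by
    rw [← hMSym, ← transpose_mul, hMA, hBsym]
  have L1 : ∀ w : Fin n → ℝ, (A *ᵥ v) ⬝ᵥ w = v ⬝ᵥ (Aᵀ *ᵥ w) := by
    intro w
    rw [dotProduct_mulVec, vecMul_transpose]
  have hδv : δv = -(A *ᵥ v) := by rw [hAdef]
  have h1 : M *ᵥ (A *ᵥ v) = B *ᵥ v := by rw [mulVec_mulVec, hMA]
  have e1 : (A *ᵥ v) ⬝ᵥ (M *ᵥ v) = v ⬝ᵥ (B *ᵥ v) := by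
    rw [L1, mulVec_mulVec, hAtM]
  have e2 : (A *ᵥ v) ⬝ᵥ (B *ᵥ v) = v ⬝ᵥ (B *ᵥ v) := by
    rw [L1, mulVec_mulVec, hAtB]
  have key : (v + δv) ⬝ᵥ (M *ᵥ (v + δv)) = v ⬝ᵥ (M *ᵥ v) - v ⬝ᵥ (B *ᵥ v) := by
    rw [hδv]
    simp only [mulVec_add, mulVec_neg, dotProduct_add, add_dotProduct,
      dotProduct_neg, neg_dotProduct, h1]
    linarith [e1, e2]
  have hpos : 0 ≤ v ⬝ᵥ (B *ᵥ v) := by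
    have := (posSemidef_iff_dotProduct_mulVec.mp hB).2 v
    simpa [star_trivial] using this
  rw [key]
  linarith
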